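/- For $\kappa > 0$ and $V(x,z) := x^2 + \log(1 + z^2)$ on $\mathbb{R}^2$, let $L$ be the operator $Lf = \tfrac{\kappa}{2}\partial_{xx}f + \big(-\tfrac12 x - \tfrac{2x}{x^2+e^{2z}}\big)\partial_x f + \big(-\tfrac12 + \tfrac{2}{x^2+e^{2z}}\big)\partial_z f$. Then for all $(x,z) \in \mathbb{R}^2$: $LV(x,z) \le \kappa + 3 - \Big(x^2 + \frac{4|z|\,\mathbbm{1}(z \le 0)}{(x^2+e^{2z})(1+z^2)}\Big)$. -/
import Mathlib

open Real Set

/-- Lyapunov estimate: for `V(x,z) = x² + log(1+z²)` and the generator `L` of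
the rescaled reverse SLE diffusion,
`LV(x,z) ≤ κ + 3 - (x² + 4|z| 𝟙(z≤0) / ((x²+e^{2z})(1+z²)))`. -/
theorem stmt_14 (κ : ℝ) (hκ : 0 < κ)
    (V : ℝ → ℝ → ℝ) (hV : V = fun x z => x ^ 2 + Real.log (1 + z ^ 2))
    (LV : ℝ → ℝ → ℝ)
    (hLV : ∀ x z, LV x z =
      κ / 2 * deriv (fun x' => deriv (fun x'' => V x'' z) x') x
      + (-(1/2) * x - 2 * x / (x ^ 2 + Real.exp (2 * z)))
          * deriv (fun x' => V x' z) x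
      + (-(1/2) + 2 / (x ^ 2 + Real.exp (2 * z)))
          * deriv (fun z' => V x z') z) :
    ∀ x z : ℝ, LV x z ≤ κ + 3 -
      (x ^ 2 + 4 * |z| * (if z ≤ 0 then (1:ℝ) else 0)
        / ((x ^ 2 + Real.exp (2 * z)) * (1 + z ^ 2))) := by
  intro x z
  have hE : (0:ℝ) < Real.exp (2 * z) := Real.exp_pos _
  have hA : (0:ℝ) < x ^ 2 + Real.exp (2 * z) := by positivity
  have hB : (0:ℝ) < 1 + z ^ 2 := by positivity
  have hd1 : ∀ t : ℝ, deriv (fun x' : ℝ => V x' z) t = 2 * t := by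
    intro t; rw [hV]; simp
  have hd2 : deriv (fun x' : ℝ => deriv (fun x'' => V x'' z) x') x = 2 := by
    have : (fun x' : ℝ => deriv (fun x'' => V x'' z) x') = fun x' : ℝ => 2 * x' := by
      funext t; exact hd1 t
    rw [this]
    simpa using ((hasDerivAt_id x).const_mul (2:ℝ)).deriv
  have hdz : deriv (fun z' : ℝ => V x z') z = 2 * z / (1 + z ^ 2) := by
    rw [hV]
    have h1 : HasDerivAt (fun z' : ℝ => 1 + z' ^ 2) (2 * z) z := by
      simpa using ((hasDerivAt_pow 2 z).const_add (1:ℝ))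
    have h : HasDerivAt (fun z' : ℝ => x ^ 2 + Real.log (1 + z' ^ 2))
        (2 * z / (1 + z ^ 2)) z := by
      simpa using (h1.log hB.ne').const_add (x ^ 2)
    exact h.deriv
  rw [hLV, hd2, hd1, hdz]
  set A := x ^ 2 + Real.exp (2 * z) with hAdef
  set B := 1 + z ^ 2 with hBdef
  have hx2 : (0:ℝ) ≤ x ^ 2 / A := by positivity
  have hexpand : κ / 2 * 2 + (-(1/2) * x - 2 * x / A) * (2 * x)
      + (-(1/2) + 2 / A) * (2 * z / B)
      = κ - x ^ 2 - 4 * (x ^ 2 / A) - z / B + 4 * (z / (A * B)) := by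
    field_simp
    ring
  rw [hexpand]
  by_cases hz : z ≤ 0
  · rw [if_pos hz, abs_of_nonpos hz]
    have hzB : -(z / B) ≤ 1 / 2 := by
      have h' : -z / B ≤ 1 / 2 := by
        rw [div_le_iff₀ hB]
        nlinarith [sq_nonneg (z + 1)]
      simpa [neg_div] using h'
    have hrw : 4 * -z * 1 / (A * B) = -(4 * (z / (A * B))) := by
      field_simp
    rw [hrw]
    linarith
  · rw [if_neg hz, mul_zero, zero_div, add_zero]
    push_neg at hz
    have hA1 : (1:ℝ) ≤ A := by
      have : (1:ℝ) ≤ Real.exp (2 * z) := by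
        rw [Real.one_le_exp_iff]; linarith
      nlinarith [sq_nonneg x]
    have hzB : 0 ≤ z / B := by positivity
    have hzAB : z / (A * B) ≤ 1 / 2 := by
      rw [div_le_iff₀ (by positivity)]
      nlinarith [sq_nonneg (z - 1)]
    linarith
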